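/- arXiv:1704.06015 — 2 statements merged into one kernel-verified Lean document; each statement's English description precedes it below -/
import Mathlib

section
/- Let C > 1 be a real constant and define B(θ) = (1/2)·ln(C + cos θ) for θ ∈ (0, π). Then B satisfies the fourth-order nonlinear ODE: 16·cot θ·(B')³ + 4·(B'')² − 4·(B')²·(cot²θ − 4·B'') − B''·cot²θ + 2·cot θ·B''' + B'·(cot θ·(csc²θ + 16·B'' + 2) + 8·B''') + B'''' = 0 at every θ ∈ (0, π), where B', B'', B''', B'''' denote the first through fourth derivatives of B with respect to θ. -/
open Real

section Aux

variable (C : ℝ)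

noncomputable def f1 : ℝ → ℝ := fun x => -Real.sin x / (2 * (C + Real.cos x))
noncomputable def f2 : ℝ → ℝ := fun x =>
  -((C + Real.cos x) * Real.cos x + Real.sin x ^ 2) / (2 * (C + Real.cos x) ^ 2)
noncomputable def f3 : ℝ → ℝ := fun x =>
  Real.sin x * ((C + Real.cos x) ^ 2 - 3 * Real.cos x * (C + Real.cos x)
    - 2 * Real.sin x ^ 2) / (2 * (C + Real.cos x) ^ 3)
noncomputable def f4 : ℝ → ℝ := fun x =>
  (Real.cos x * (C + Real.cos x) ^ 3 - 3 * Real.cos x ^ 2 * (C + Real.cos x) ^ 2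
    + 4 * Real.sin x ^ 2 * (C + Real.cos x) ^ 2
    - 12 * Real.cos x * Real.sin x ^ 2 * (C + Real.cos x)
    - 6 * Real.sin x ^ 4) / (2 * (C + Real.cos x) ^ 4)

variable {C}

lemma hu (hC : 1 < C) (x : ℝ) : 0 < C + Real.cos x := by nlinarith [Real.neg_one_le_cos x]

lemma hd1 (hC : 1 < C) (x : ℝ) :
    HasDerivAt (fun θ => Real.log (C + Real.cos θ) / 2) (f1 C x) x := by
  have h := (((Real.hasDerivAt_cos x).const_add C).log (hu hC x).ne').div_const 2
  refine h.congr_deriv (Eq.symm ?_)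
  unfold f1
  have h0 := (hu hC x).ne'
  field_simp

lemma hd2 (hC : 1 < C) (x : ℝ) : HasDerivAt (f1 C) (f2 C x) x := by
  have hne : 2 * (C + Real.cos x) ≠ 0 := by have := hu hC x; positivity
  have h := ((Real.hasDerivAt_sin x).neg).div
    (((Real.hasDerivAt_cos x).const_add C).const_mul 2) hne
  refine h.congr_deriv (Eq.symm ?_)
  unfold f2
  simp only [Pi.neg_apply, Pi.add_apply, Pi.sub_apply, Pi.mul_apply, Pi.pow_apply]
  have := (hu hC x).ne'
  field_simp
  ring

lemma hd3 (hC : 1 < C) (x : ℝ) : HasDerivAt (f2 C) (f3 C x) x := by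
  have hne : 2 * (C + Real.cos x) ^ 2 ≠ 0 := by have := hu hC x; positivity
  have hnum := ((((Real.hasDerivAt_cos x).const_add C).mul (Real.hasDerivAt_cos x)).add
    ((Real.hasDerivAt_sin x).pow 2)).neg
  have hden := (((Real.hasDerivAt_cos x).const_add C).pow 2).const_mul 2
  have h := hnum.div hden hne
  refine h.congr_deriv (Eq.symm ?_)
  unfold f3
  simp only [Pi.neg_apply, Pi.add_apply, Pi.sub_apply, Pi.mul_apply, Pi.pow_apply]
  have := (hu hC x).ne'
  field_simp
  ring

lemma hd4 (hC : 1 < C) (x : ℝ) : HasDerivAt (f3 C) (f4 C x) x := by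
  have hne : 2 * (C + Real.cos x) ^ 3 ≠ 0 := by have := hu hC x; positivity
  have hu' := (Real.hasDerivAt_cos x).const_add C
  have hnum := (Real.hasDerivAt_sin x).mul
    (((hu'.pow 2).sub (((Real.hasDerivAt_cos x).const_mul 3).mul hu')).sub
      (((Real.hasDerivAt_sin x).pow 2).const_mul 2))
  have hden := (hu'.pow 3).const_mul 2
  have h := hnum.div hden hne
  refine h.congr_deriv (Eq.symm ?_)
  unfold f4
  simp only [Pi.neg_apply, Pi.add_apply, Pi.sub_apply, Pi.mul_apply, Pi.pow_apply]
  have := (hu hC x).ne'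
  field_simp
  ring

end Aux

set_option maxHeartbeats 4000000 in
/-- For `C > 1`, the function `B θ = (1/2)·ln(C + cos θ)` satisfies the fourth-order
nonlinear ODE (the angular part of the vacuum condition for the axi-symmetric
Bondi-Sachs metrics with nonzero cosmological constant) on `(0, π)`. -/
theorem B_satisfies_fourth_order_ODE (C : ℝ) (hC : 1 < C)
    (B : ℝ → ℝ) (hB : ∀ θ, B θ = Real.log (C + Real.cos θ) / 2) :
    ∀ θ ∈ Set.Ioo (0 : ℝ) π,
      let B' := deriv B
      let B'' := deriv (deriv B)
      let B''' := deriv (deriv (deriv B))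
      let B'''' := deriv (deriv (deriv (deriv B)))
      let cot := Real.cos θ / Real.sin θ
      let csc := 1 / Real.sin θ
      16 * cot * (B' θ) ^ 3 + 4 * (B'' θ) ^ 2
        - 4 * (B' θ) ^ 2 * (cot ^ 2 - 4 * B'' θ)
        - B'' θ * cot ^ 2 + 2 * cot * B''' θ
        + B' θ * (cot * (csc ^ 2 + 16 * B'' θ + 2) + 8 * B''' θ)
        + B'''' θ = 0 := by
  have hBfun : B = fun θ => Real.log (C + Real.cos θ) / 2 := funext hB
  have d1 : deriv B = f1 C := by
    funext x; rw [hBfun]; exact (hd1 hC x).deriv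
  have d2 : deriv (deriv B) = f2 C := by
    rw [d1]; funext x; exact (hd2 hC x).deriv
  have d3 : deriv (deriv (deriv B)) = f3 C := by
    rw [d2]; funext x; exact (hd3 hC x).deriv
  have d4 : deriv (deriv (deriv (deriv B))) = f4 C := by
    rw [d3]; funext x; exact (hd4 hC x).deriv
  intro θ hθ
  have hs : 0 < Real.sin θ := Real.sin_pos_of_pos_of_lt_pi hθ.1 hθ.2
  have hsne : Real.sin θ ≠ 0 := hs.ne'
  have huθ : (C + Real.cos θ) ≠ 0 := (hu hC θ).ne'
  have hP : Real.sin θ ^ 2 + Real.cos θ ^ 2 = 1 := Real.sin_sq_add_cos_sq θ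
  have e1 : deriv B θ = f1 C θ := by rw [d1]
  have e2 : deriv (deriv B) θ = f2 C θ := by rw [d2]
  have e3 : deriv (deriv (deriv B)) θ = f3 C θ := by rw [d3]
  have e4 : deriv (deriv (deriv (deriv B))) θ = f4 C θ := by rw [d4]
  simp only [e1, e2, e3, e4]
  unfold f1 f2 f3 f4
  have huθ' := hu hC θ
  have hD : (8 : ℝ) * Real.sin θ ^ 3 * (C + Real.cos θ) ^ 4 ≠ 0 := by positivity
  apply mul_right_cancel₀ hD
  rw [zero_mul]
  rw [show (0 : ℝ) = 4 * Real.sin θ * Real.cos θ * (C + Real.cos θ) ^ 3 *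
      (Real.sin θ ^ 2 + Real.cos θ ^ 2 - 1) from by rw [hP]; ring]
  field_simp
  ring_nf
end

section
/- Let C : ℝ → ℝ be differentiable with C(u) > 1 for all u, let m ∈ ℝ, and define σ(u) = −C'(u)/(C(u)² − 1), τ(u) = m·(C(u)² − 1)^{3/2}, and for (u, θ) ∈ ℝ × (0, π) define B(u, θ) = (1/2)·ln(C(u) + cos θ) and M(u, θ) = τ(u)/(C(u) + cos θ)². Then for all u ∈ ℝ and θ ∈ (0, π): 4·M·∂B/∂u − 2·∂M/∂u − 6·cos θ·M·σ − 3·sin θ·(∂M/∂θ)·σ = 0, where ∂/∂u and ∂/∂θ denote partial derivatives in the first and second variable respectively. -/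
open Real

/-- The u-dependent part of the vacuum field equation holds for the explicit data
`B(u,θ) = (1/2)·ln(C(u) + cos θ)`, `M(u,θ) = τ(u)/(C(u) + cos θ)²`,
`σ = −C'/(C² − 1)`, `τ = m·(C² − 1)^{3/2}`. -/
theorem u_dependent_vacuum_equation (C : ℝ → ℝ) (hCdiff : Differentiable ℝ C)
    (hC : ∀ u, 1 < C u) (m : ℝ)
    (σ τ : ℝ → ℝ) (B M : ℝ → ℝ → ℝ)
    (hσ : ∀ u, σ u = -(deriv C u) / ((C u) ^ 2 - 1))
    (hτ : ∀ u, τ u = m * ((C u) ^ 2 - 1) ^ ((3 : ℝ) / 2))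
    (hB : ∀ u θ, B u θ = Real.log (C u + Real.cos θ) / 2)
    (hM : ∀ u θ, M u θ = τ u / (C u + Real.cos θ) ^ 2) :
    ∀ u : ℝ, ∀ θ ∈ Set.Ioo (0 : ℝ) π,
      4 * M u θ * deriv (fun v => B v θ) u
        - 2 * deriv (fun v => M v θ) u
        - 6 * Real.cos θ * M u θ * σ u
        - 3 * Real.sin θ * deriv (fun t => M u t) θ * σ u = 0 := by
  intro u θ hθ
  have hC1 := hC u
  have hcos : -1 ≤ Real.cos θ := Real.neg_one_le_cos θ
  have hD : 0 < C u + Real.cos θ := by linarith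
  have hs : 0 < (C u) ^ 2 - 1 := by nlinarith
  have hCd : HasDerivAt C (deriv C u) u := (hCdiff u).hasDerivAt
  -- derivative of v ↦ C v + cos θ
  have hDv : HasDerivAt (fun v => C v + Real.cos θ) (deriv C u) u := hCd.add_const _
  -- B derivative
  have hBd : deriv (fun v => B v θ) u
      = deriv C u / (C u + Real.cos θ) / 2 := by
    simp only [hB]
    exact ((hDv.log hD.ne').div_const 2).deriv
  -- derivative of v ↦ C v ^ 2 - 1
  have hsd : HasDerivAt (fun v => (C v) ^ 2 - 1) (2 * C u * deriv C u) u := by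
    have := (hCd.fun_pow 2).sub_const 1
    norm_num [-hasDerivAt_sub_const_iff] at this
    convert this using 1 <;> ring
  -- derivative of τ
  have hτd : HasDerivAt τ
      (m * ((3 / 2) * ((C u) ^ 2 - 1) ^ ((1:ℝ)/2) * (2 * C u * deriv C u))) u := by
    have hτf : τ = fun v => m * ((C v) ^ 2 - 1) ^ ((3 : ℝ) / 2) := funext hτ
    rw [hτf]
    have h := (hsd.rpow_const (p := (3:ℝ)/2) (Or.inr (by norm_num))).const_mul m
    convert h using 2 <;> norm_num <;> first | rfl | ring
  -- M derivative in u
  have hMud : deriv (fun v => M v θ) u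
      = ((m * ((3 / 2) * ((C u) ^ 2 - 1) ^ ((1:ℝ)/2) * (2 * C u * deriv C u)))
          * (C u + Real.cos θ) ^ 2
          - τ u * (2 * (C u + Real.cos θ) * deriv C u))
        / ((C u + Real.cos θ) ^ 2) ^ 2 := by
    simp only [hM]
    have hpow : HasDerivAt (fun v => (C v + Real.cos θ) ^ 2)
        (2 * (C u + Real.cos θ) * deriv C u) u := by
      have := hDv.fun_pow 2
      norm_num at this
      convert this using 1 <;> ring
    exact (hτd.div hpow (pow_ne_zero 2 hD.ne')).deriv
  -- M derivative in θ
  have hMθd : deriv (fun t => M u t) θ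
      = (0 * (C u + Real.cos θ) ^ 2
          - τ u * (2 * (C u + Real.cos θ) * (-Real.sin θ)))
        / ((C u + Real.cos θ) ^ 2) ^ 2 := by
    simp only [hM]
    have hcosd : HasDerivAt (fun t => C u + Real.cos t) (-Real.sin θ) θ :=
      (Real.hasDerivAt_cos θ).const_add _
    have hpow : HasDerivAt (fun t => (C u + Real.cos t) ^ 2)
        (2 * (C u + Real.cos θ) * (-Real.sin θ)) θ := by
      have := hcosd.fun_pow 2
      norm_num [-hasDerivAt_const_add_iff] at this
      convert this using 1 <;> first | rfl | ring
    exact ((hasDerivAt_const θ (τ u)).div hpow (pow_ne_zero 2 hD.ne')).deriv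
  -- algebraic identity
  have hq : ((C u) ^ 2 - 1) ^ ((3:ℝ)/2)
      = ((C u) ^ 2 - 1) ^ ((1:ℝ)/2) * ((C u) ^ 2 - 1) := by
    rw [show (3:ℝ)/2 = 1/2 + 1 by norm_num, Real.rpow_add hs, Real.rpow_one]
  rw [hBd, hMud, hMθd, hσ, hτ u, hM u θ, hτ u, hq]
  have hsin : Real.sin θ ^ 2 = 1 - Real.cos θ ^ 2 := Real.sin_sq θ
  set q := ((C u) ^ 2 - 1) ^ ((1:ℝ)/2)
  field_simp
  ring_nf
  rw [hsin]
  ring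
end
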